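/- Let h(t) = ∫_0^t cos(s)/√(t-s) ds and H_s(t) = ∫_0^t h(s) sin(s) ds. Then H_s(t) = (1/4)·{2√t cos t − √(2π)·( C(√(2/π)√t) cos 2t + S(√(2/π)√t)·(sin 2t − 2t) )} for all t ≥ 0. -/

import Mathlib

open Real MeasureTheory intervalIntegral

/-- The Fresnel cosine integral `C(z) = ∫_0^z cos(π s²/2) ds`. -/
noncomputable def fresnelC (z : ℝ) : ℝ := ∫ s in (0:ℝ)..z, Real.cos (π * s ^ 2 / 2)

/-- The Fresnel sine integral `S(z) = ∫_0^z sin(π s²/2) ds`. -/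
noncomputable def fresnelS (z : ℝ) : ℝ := ∫ s in (0:ℝ)..z, Real.sin (π * s ^ 2 / 2)

/-- The Abel transform of `cos`: `h(t) = ∫_0^t cos s/√(t-s) ds`. -/
noncomputable def abelCos (t : ℝ) : ℝ := ∫ s in (0:ℝ)..t, Real.cos s / Real.sqrt (t - s)

namespace HsAux

lemma c_pos : 0 < Real.sqrt (2 / π) := Real.sqrt_pos.2 (by positivity)
lemma c_sq : Real.sqrt (2 / π) ^ 2 = 2 / π := Real.sq_sqrt (by positivity)

lemma sqrt2pi_mul : Real.sqrt (2 * π) * Real.sqrt (2 / π) = 2 := by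
  rw [← Real.sqrt_mul (by positivity), show 2 * π * (2 / π) = 4 by field_simp; ring,
    show (4:ℝ) = 2 ^ 2 by norm_num, Real.sqrt_sq (by norm_num)]

lemma fresnelC_hasDerivAt (z : ℝ) : HasDerivAt fresnelC (Real.cos (π * z ^ 2 / 2)) z := by
  have hc : Continuous fun s : ℝ => Real.cos (π * s ^ 2 / 2) := by continuity
  exact intervalIntegral.integral_hasDerivAt_right (hc.intervalIntegrable _ _)
    (hc.aestronglyMeasurable.stronglyMeasurableAtFilter) hc.continuousAt

lemma fresnelS_hasDerivAt (z : ℝ) : HasDerivAt fresnelS (Real.sin (π * z ^ 2 / 2)) z := by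
  have hc : Continuous fun s : ℝ => Real.sin (π * s ^ 2 / 2) := by continuity
  exact intervalIntegral.integral_hasDerivAt_right (hc.intervalIntegrable _ _)
    (hc.aestronglyMeasurable.stronglyMeasurableAtFilter) hc.continuousAt

lemma fresnelC_continuous : Continuous fresnelC :=
  continuous_iff_continuousAt.2 fun z => (fresnelC_hasDerivAt z).continuousAt

lemma fresnelS_continuous : Continuous fresnelS :=
  continuous_iff_continuousAt.2 fun z => (fresnelS_hasDerivAt z).continuousAt

lemma image_lemma {t : ℝ} (ht : 0 < t) :
    (fun u : ℝ => t - u ^ 2) '' Set.Ioo 0 (Real.sqrt t) = Set.Ioo 0 t := by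
  ext y
  simp only [Set.mem_image, Set.mem_Ioo]
  constructor
  · rintro ⟨u, ⟨hu0, hut⟩, rfl⟩
    have h1 : u ^ 2 < t := by
      nlinarith [Real.sq_sqrt ht.le, Real.sqrt_nonneg t]
    constructor <;> nlinarith
  · rintro ⟨hy0, hyt⟩
    refine ⟨Real.sqrt (t - y), ⟨Real.sqrt_pos.2 (by linarith), ?_⟩, ?_⟩
    · exact Real.sqrt_lt_sqrt (by linarith) (by linarith)
    · rw [Real.sq_sqrt (by linarith)]; ring

lemma abelCos_sub (t : ℝ) (ht : 0 ≤ t) :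
    abelCos t = ∫ u in (0:ℝ)..Real.sqrt t, 2 * Real.cos (t - u ^ 2) := by
  rcases eq_or_lt_of_le ht with rfl | ht
  · simp [abelCos, Real.sqrt_zero]
  have hst : (0:ℝ) < Real.sqrt t := Real.sqrt_pos.2 ht
  rw [abelCos, intervalIntegral.integral_of_le ht.le,
    intervalIntegral.integral_of_le hst.le,
    MeasureTheory.integral_Ioc_eq_integral_Ioo,
    MeasureTheory.integral_Ioc_eq_integral_Ioo, ← image_lemma ht]
  rw [MeasureTheory.integral_image_eq_integral_abs_deriv_smul measurableSet_Ioo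
      (f' := fun u => -(2 * u))
      (fun x _ => by
        simpa using (((hasDerivAt_pow 2 x).const_sub t).hasDerivWithinAt :
          HasDerivWithinAt _ _ _ x)) ?inj (fun s => Real.cos s / Real.sqrt (t - s))]
  case inj =>
    intro a ha b hb hab
    simp only [Set.mem_Ioo] at ha hb
    simp only at hab
    nlinarith [hab]
  refine MeasureTheory.setIntegral_congr_fun measurableSet_Ioo (fun u hu => ?_)
  simp only [Set.mem_Ioo] at hu
  have h2 : t - (t - u ^ 2) = u ^ 2 := by ring
  rw [h2]
  have h3 : Real.sqrt (u ^ 2) = u := Real.sqrt_sq hu.1.le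
  rw [h3, abs_of_nonpos (by nlinarith), smul_eq_mul]
  rw [neg_neg, mul_div_assoc', mul_comm, mul_div_assoc, mul_div_assoc,
    div_self hu.1.ne', mul_one, mul_comm]

lemma fresnelC_scaled (x : ℝ) :
    fresnelC (Real.sqrt (2 / π) * x) = Real.sqrt (2 / π) * ∫ u in (0:ℝ)..x, Real.cos (u ^ 2) := by
  have key := intervalIntegral.integral_comp_mul_left
    (f := fun s => Real.cos (π * s ^ 2 / 2)) (a := 0) (b := x) (c := Real.sqrt (2 / π)) c_pos.ne'
  have h1 : ∀ s : ℝ, Real.cos (π * (Real.sqrt (2 / π) * s) ^ 2 / 2) = Real.cos (s ^ 2) := by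
    intro s; congr 1; rw [mul_pow, c_sq]; field_simp
  simp only [h1, mul_zero] at key
  rw [fresnelC, key, smul_eq_mul, ← mul_assoc, mul_inv_cancel₀ c_pos.ne', one_mul]

lemma fresnelS_scaled (x : ℝ) :
    fresnelS (Real.sqrt (2 / π) * x) = Real.sqrt (2 / π) * ∫ u in (0:ℝ)..x, Real.sin (u ^ 2) := by
  have key := intervalIntegral.integral_comp_mul_left
    (f := fun s => Real.sin (π * s ^ 2 / 2)) (a := 0) (b := x) (c := Real.sqrt (2 / π)) c_pos.ne'
  have h1 : ∀ s : ℝ, Real.sin (π * (Real.sqrt (2 / π) * s) ^ 2 / 2) = Real.sin (s ^ 2) := by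
    intro s; congr 1; rw [mul_pow, c_sq]; field_simp
  simp only [h1, mul_zero] at key
  rw [fresnelS, key, smul_eq_mul, ← mul_assoc, mul_inv_cancel₀ c_pos.ne', one_mul]

lemma abelCos_eq (t : ℝ) (ht : 0 ≤ t) :
    abelCos t = Real.sqrt (2 * π) *
      (fresnelC (Real.sqrt (2 / π) * Real.sqrt t) * Real.cos t
        + fresnelS (Real.sqrt (2 / π) * Real.sqrt t) * Real.sin t) := by
  have hA : IntervalIntegrable (fun u : ℝ => Real.cos (u ^ 2)) volume 0 (Real.sqrt t) :=
    (Real.continuous_cos.comp (continuous_pow 2)).intervalIntegrable _ _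
  have hB : IntervalIntegrable (fun u : ℝ => Real.sin (u ^ 2)) volume 0 (Real.sqrt t) :=
    (Real.continuous_sin.comp (continuous_pow 2)).intervalIntegrable _ _
  rw [abelCos_sub t ht, fresnelC_scaled, fresnelS_scaled]
  have step : (∫ u in (0:ℝ)..Real.sqrt t, 2 * Real.cos (t - u ^ 2))
      = (2 * Real.cos t) * (∫ u in (0:ℝ)..Real.sqrt t, Real.cos (u ^ 2))
        + (2 * Real.sin t) * (∫ u in (0:ℝ)..Real.sqrt t, Real.sin (u ^ 2)) := by
    rw [← intervalIntegral.integral_const_mul, ← intervalIntegral.integral_const_mul,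
      ← intervalIntegral.integral_add (hA.const_mul _) (hB.const_mul _)]
    apply intervalIntegral.integral_congr
    intro u _
    simp only [Real.cos_sub]
    ring
  rw [step]
  linear_combination -(Real.cos t * (∫ u in (0:ℝ)..Real.sqrt t, Real.cos (u ^ 2))
    + Real.sin t * (∫ u in (0:ℝ)..Real.sqrt t, Real.sin (u ^ 2))) * sqrt2pi_mul

lemma deriv_identity (a b s C S P c x : ℝ) (hs : s ≠ 0) (hs2 : s * s = x) (hpc : P * c = 2) :
    (1/4) * (2 * (1/(2*s)) * b + 2 * s * (-a)
      - P * ((b * (c * (1/(2*s)))) * (1 - 2*a^2) + C * (-(2*(a*b))*2)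
        + ((a * (c * (1/(2*s)))) * (2*(a*b) - 2*x) + S * ((1 - 2*a^2)*2 - 2))))
    = P * (C * b + S * a) * a := by
  have h1 : x = s * s := hs2.symm
  subst h1
  field_simp
  ring_nf
  linear_combination (s * b * (1 - 2*a^2) + s * a * (2*a*b - 2*(s*s))
    - (b*s + b - 2*s^2*a - 2*s^3*a)) * hpc

/-- the closed-form antiderivative -/
noncomputable def F (y : ℝ) : ℝ :=
  (1/4) * (2 * Real.sqrt y * Real.cos y
    - Real.sqrt (2 * π) *
      (fresnelC (Real.sqrt (2 / π) * Real.sqrt y) * Real.cos (2 * y)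
        + fresnelS (Real.sqrt (2 / π) * Real.sqrt y) * (Real.sin (2 * y) - 2 * y)))

lemma F_hasDerivAt {x : ℝ} (hx : 0 < x) :
    HasDerivAt F
      (Real.sqrt (2 * π) *
        (fresnelC (Real.sqrt (2 / π) * Real.sqrt x) * Real.cos x
          + fresnelS (Real.sqrt (2 / π) * Real.sqrt x) * Real.sin x) * Real.sin x) x := by
  have hsx : (0:ℝ) < Real.sqrt x := Real.sqrt_pos.2 hx
  have hsq : HasDerivAt Real.sqrt (1 / (2 * Real.sqrt x)) x := Real.hasDerivAt_sqrt hx.ne'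
  have hinner : HasDerivAt (fun y => Real.sqrt (2 / π) * Real.sqrt y)
      (Real.sqrt (2 / π) * (1 / (2 * Real.sqrt x))) x := hsq.const_mul _
  have harg : π * (Real.sqrt (2 / π) * Real.sqrt x) ^ 2 / 2 = x := by
    rw [mul_pow, c_sq, Real.sq_sqrt hx.le]; field_simp
  have hC : HasDerivAt (fun y => fresnelC (Real.sqrt (2 / π) * Real.sqrt y))
      (Real.cos x * (Real.sqrt (2 / π) * (1 / (2 * Real.sqrt x)))) x := by
    have := (fresnelC_hasDerivAt (Real.sqrt (2 / π) * Real.sqrt x)).comp x hinner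
    rwa [harg] at this
  have hS : HasDerivAt (fun y => fresnelS (Real.sqrt (2 / π) * Real.sqrt y))
      (Real.sin x * (Real.sqrt (2 / π) * (1 / (2 * Real.sqrt x)))) x := by
    have := (fresnelS_hasDerivAt (Real.sqrt (2 / π) * Real.sqrt x)).comp x hinner
    rwa [harg] at this
  have h2y : HasDerivAt (fun y : ℝ => 2 * y) 2 x := by
    simpa using (hasDerivAt_id x).const_mul 2
  have hcos2 : HasDerivAt (fun y : ℝ => Real.cos (2 * y)) (-Real.sin (2 * x) * 2) x :=
    (Real.hasDerivAt_cos (2 * x)).comp x h2y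
  have hsin2 : HasDerivAt (fun y : ℝ => Real.sin (2 * y)) (Real.cos (2 * x) * 2) x :=
    (Real.hasDerivAt_sin (2 * x)).comp x h2y
  have hF1 : HasDerivAt (fun y => 2 * Real.sqrt y * Real.cos y)
      (2 * (1 / (2 * Real.sqrt x)) * Real.cos x + 2 * Real.sqrt x * (-Real.sin x)) x :=
    (hsq.const_mul 2).mul (Real.hasDerivAt_cos x)
  have hF2 := hC.mul hcos2
  have hF3 := hS.mul (hsin2.sub h2y)
  have hF := (hF1.sub ((hF2.add hF3).const_mul (Real.sqrt (2 * π)))).const_mul (1/4)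
  convert hF using 1
  case e'_4 => rfl
  case e'_5 => rfl
  case e'_8 => rfl
  simp only [Pi.sub_apply]
  rw [Real.cos_two_mul', Real.sin_two_mul]
  have := deriv_identity (Real.sin x) (Real.cos x) (Real.sqrt x)
    (fresnelC (Real.sqrt (2 / π) * Real.sqrt x)) (fresnelS (Real.sqrt (2 / π) * Real.sqrt x))
    (Real.sqrt (2 * π)) (Real.sqrt (2 / π)) x hsx.ne' (Real.mul_self_sqrt hx.le) sqrt2pi_mul
  linear_combination -this + (Real.sqrt (2*π) * Real.sqrt (2/π) * Real.cos x / (8 * Real.sqrt x)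
    + Real.sqrt (2*π) * fresnelS (Real.sqrt (2/π) * Real.sqrt x) / 2) * Real.sin_sq_add_cos_sq x

lemma F_continuous : Continuous F := by
  unfold F
  exact continuous_const.mul (((continuous_const.mul Real.continuous_sqrt).mul
      Real.continuous_cos).sub (continuous_const.mul
    (((fresnelC_continuous.comp (continuous_const.mul Real.continuous_sqrt)).mul
        (Real.continuous_cos.comp (continuous_const.mul continuous_id))).add
      ((fresnelS_continuous.comp (continuous_const.mul Real.continuous_sqrt)).mul
        ((Real.continuous_sin.comp (continuous_const.mul continuous_id)).sub
          (continuous_const.mul continuous_id))))))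

end HsAux

open HsAux in
/-- closed form for `H_s(t) = ∫_0^t h(s) sin s ds`. -/
theorem Hs_closed_form (t : ℝ) (ht : 0 ≤ t) :
    (∫ s in (0:ℝ)..t, abelCos s * Real.sin s)
      = (1/4) * (2 * Real.sqrt t * Real.cos t
          - Real.sqrt (2 * π) *
            (fresnelC (Real.sqrt (2 / π) * Real.sqrt t) * Real.cos (2 * t)
              + fresnelS (Real.sqrt (2 / π) * Real.sqrt t) * (Real.sin (2 * t) - 2 * t))) := by
  set G : ℝ → ℝ := fun x => Real.sqrt (2 * π) *
      (fresnelC (Real.sqrt (2 / π) * Real.sqrt x) * Real.cos x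
        + fresnelS (Real.sqrt (2 / π) * Real.sqrt x) * Real.sin x) * Real.sin x with hG
  have hGcont : Continuous G := by
    apply Continuous.mul _ Real.continuous_sin
    apply Continuous.mul continuous_const
    exact ((fresnelC_continuous.comp (continuous_const.mul Real.continuous_sqrt)).mul
      Real.continuous_cos).add
      ((fresnelS_continuous.comp (continuous_const.mul Real.continuous_sqrt)).mul
      Real.continuous_sin)
  have hcongr : (∫ s in (0:ℝ)..t, abelCos s * Real.sin s) = ∫ s in (0:ℝ)..t, G s := by
    apply intervalIntegral.integral_congr
    intro s hs
    rw [Set.uIcc_of_le ht] at hs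
    rw [hG]
    simp only
    rw [abelCos_eq s hs.1]
  have hftc : (∫ s in (0:ℝ)..t, G s) = F t - F 0 := by
    apply intervalIntegral.integral_eq_sub_of_hasDeriv_right_of_le ht
      F_continuous.continuousOn
      (fun x hx => (F_hasDerivAt hx.1).hasDerivWithinAt)
      (hGcont.intervalIntegrable _ _)
  have hF0 : F 0 = 0 := by
    simp [F, Real.sqrt_zero, fresnelC, fresnelS]
  rw [hcongr, hftc, hF0, sub_zero]
  rfl
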